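/- Let k be a field of characteristic zero, P = k[x,y,z,t], and S = k[x,y,z] ⊆ P. Let I ⊆ P be a homogeneous ideal, let d ≥ 1, and let ℓ ∈ S_1 be a linear form in x, y, z only that is a nonzerodivisor on P/I. Assume that for every f in the degree-d component I_d one has ℓ·(∂f/∂t) ∈ I_d. Then I_d is spanned as a k-vector space by its elements of the form t^{d-i}·h with h ∈ S_i (0 ≤ i ≤ d), i.e., by those of its elements that are a power of t times a form in x, y, z. -/

import Mathlib

open MvPolynomial

namespace Stmt2Aux

/-- weight function picking out the exponent of `t = X 3`. -/
noncomputable def w4 : Fin 4 → ℕ := fun i => if i = 3 then 1 else 0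

variable {k : Type*} [Field k] [CharZero k]

lemma weight_w4 (m : Fin 4 →₀ ℕ) : Finsupp.weight w4 m = m 3 := by
  rw [Finsupp.weight_apply, Finsupp.sum]
  rw [Finset.sum_congr rfl (fun i _ => show m i • w4 i = if i = 3 then m 3 else 0 by
    by_cases h : i = 3 <;> simp [w4, h])]
  rw [Finset.sum_ite_eq' m.support 3 (fun _ => m 3)]
  by_cases h : (3 : Fin 4) ∈ m.support
  · simp [h]
  · simp [h, Finsupp.notMem_support_iff.mp h]

lemma coeffD (j : ℕ) (f : MvPolynomial (Fin 4) k) (m : Fin 4 →₀ ℕ) :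
    coeff m (weightedHomogeneousComponent w4 j f) = if m 3 = j then coeff m f else 0 := by
  rw [coeff_weightedHomogeneousComponent, weight_w4]

lemma Ecoeff (f : MvPolynomial (Fin 4) k) (m : Fin 4 →₀ ℕ) :
    coeff m (X 3 * pderiv 3 f) = (m 3 : k) * coeff m f := by
  induction f using MvPolynomial.induction_on' with
  | monomial s a =>
    rw [pderiv_monomial]
    by_cases hs : s 3 = 0
    · rw [hs]
      simp only [Nat.cast_zero, mul_zero, map_zero, MulZeroClass.mul_zero, coeff_zero]
      rw [coeff_monomial]
      split_ifs with h
      · subst h; rw [hs]; simp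
      · simp
    · have hle : Finsupp.single (3 : Fin 4) 1 ≤ s :=
        Finsupp.single_le_iff.mpr (Nat.one_le_iff_ne_zero.mpr hs)
      rw [show (X 3 : MvPolynomial (Fin 4) k) = monomial (Finsupp.single 3 1) 1 from
        (X_pow_eq_monomial (n := (3:Fin 4)) (e := 1)).symm.trans (pow_one _) |>.symm]
      rw [monomial_mul, one_mul, add_tsub_cancel_of_le hle, coeff_monomial, coeff_monomial]
      split_ifs with h
      · subst h; ring
      · simp
  | add p q hp hq =>
    simp [map_add, mul_add, coeff_add, hp, hq]


lemma homE {f : MvPolynomial (Fin 4) k} {d : ℕ}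
    (hf : f ∈ homogeneousSubmodule (Fin 4) k d) :
    X 3 * pderiv 3 f ∈ homogeneousSubmodule (Fin 4) k d := by
  rw [mem_homogeneousSubmodule] at hf ⊢
  intro m hm
  apply hf
  rw [Ecoeff] at hm
  exact right_ne_zero_of_mul hm

lemma homD {f : MvPolynomial (Fin 4) k} {d : ℕ}
    (hf : f ∈ homogeneousSubmodule (Fin 4) k d) (j : ℕ) :
    weightedHomogeneousComponent w4 j f ∈ homogeneousSubmodule (Fin 4) k d := by
  rw [mem_homogeneousSubmodule] at hf ⊢
  intro m hm
  apply hf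
  rw [coeffD] at hm
  intro h0
  apply hm
  split_ifs <;> simp [h0]

lemma m3_le {f : MvPolynomial (Fin 4) k} {d : ℕ}
    (hf : f ∈ homogeneousSubmodule (Fin 4) k d) {m : Fin 4 →₀ ℕ}
    (hm : coeff m f ≠ 0) : m 3 ≤ d := by
  have h1 : Finsupp.weight (1 : Fin 4 → ℕ) m = d := hf hm
  have h2 : m 3 ≤ Finsupp.weight (1 : Fin 4 → ℕ) m :=
    Finsupp.le_weight _ (by simp) m
  omega

lemma Dzero {f : MvPolynomial (Fin 4) k} {d j : ℕ}
    (hf : f ∈ homogeneousSubmodule (Fin 4) k d) (hj : d < j) :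
    weightedHomogeneousComponent w4 j f = 0 := by
  ext m
  rw [coeffD, coeff_zero]
  split_ifs with h
  · by_contra hne
    have := m3_le hf hne
    omega
  · rfl

lemma decomp {f : MvPolynomial (Fin 4) k} {d : ℕ}
    (hf : f ∈ homogeneousSubmodule (Fin 4) k d) :
    f = ∑ j ∈ Finset.range (d + 1), weightedHomogeneousComponent w4 j f := by
  ext m
  rw [coeff_sum]
  simp only [coeffD]
  rw [Finset.sum_ite_eq (Finset.range (d + 1)) (m 3) (fun _ => coeff m f)]
  split_ifs with h
  · rfl
  · by_contra hne
    have := m3_le hf (fun h0 => hne (by rw [h0]))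
    simp [Finset.mem_range] at h
    omega

end Stmt2Aux


/-- Let `P = k[x,y,z,t]` (char `k` = 0), `I ⊆ P` a homogeneous ideal,
`d ≥ 1`, and let `ℓ` be a linear form in `x, y, z` only (variables `0, 1, 2`) which is a
nonzerodivisor on `P/I`.  If `ℓ·(∂f/∂t) ∈ I_d` for every `f ∈ I_d`, then `I_d` is spanned
as a `k`-vector space by those of its elements that have the form `t^(d-i)·h` with
`h ∈ S_i = k[x,y,z]_i`.  Here the variable `t` is `X 3`. -/
theorem stmt_2 {k : Type*} [Field k] [CharZero k]
    (I : Ideal (MvPolynomial (Fin 4) k))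
    (hIhom : ∀ f ∈ I, ∀ n : ℕ, homogeneousComponent n f ∈ I)
    (d : ℕ) (hd : 1 ≤ d)
    (ℓ : MvPolynomial (Fin 4) k)
    (hℓ1 : ℓ ∈ homogeneousSubmodule (Fin 4) k 1)
    (hℓt : (3 : Fin 4) ∉ ℓ.vars)
    (hreg : ∀ g : MvPolynomial (Fin 4) k, ℓ * g ∈ I → g ∈ I)
    (hder : ∀ f ∈ I, f ∈ homogeneousSubmodule (Fin 4) k d →
      ℓ * pderiv (3 : Fin 4) f ∈ I) :
    Submodule.span k {f : MvPolynomial (Fin 4) k |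
        f ∈ I ∧ f ∈ homogeneousSubmodule (Fin 4) k d ∧
        ∃ i ≤ d, ∃ h : MvPolynomial (Fin 4) k,
          h ∈ homogeneousSubmodule (Fin 4) k i ∧ (3 : Fin 4) ∉ h.vars ∧
          f = X 3 ^ (d - i) * h} =
      Submodule.restrictScalars k I ⊓ homogeneousSubmodule (Fin 4) k d := by
  classical
  have hE : ∀ f ∈ I, f ∈ homogeneousSubmodule (Fin 4) k d → X 3 * pderiv 3 f ∈ I := by
    intro f hfI hfd
    apply hreg
    have h2 : X 3 * (ℓ * pderiv 3 f) ∈ I := I.mul_mem_left _ (hder f hfI hfd)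
    rwa [mul_left_comm] at h2
  have hsmul : ∀ (c : k) (f : MvPolynomial (Fin 4) k), f ∈ I → c • f ∈ I := by
    intro c f hf
    rw [MvPolynomial.smul_eq_C_mul]
    exact I.mul_mem_left _ hf
  have key : ∀ n : ℕ, ∀ f, f ∈ I → f ∈ homogeneousSubmodule (Fin 4) k d →
      ((Finset.range (d + 1)).filter
        (fun j => weightedHomogeneousComponent Stmt2Aux.w4 j f ≠ 0)).card ≤ n →
      ∀ j, weightedHomogeneousComponent Stmt2Aux.w4 j f ∈ I := by
    intro n
    induction n with
    | zero =>
      intro f hfI hfd hcard j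
      by_cases hj : j ≤ d
      · have h0 : weightedHomogeneousComponent Stmt2Aux.w4 j f = 0 := by
          by_contra h
          have hmem : j ∈ (Finset.range (d + 1)).filter
              (fun j => weightedHomogeneousComponent Stmt2Aux.w4 j f ≠ 0) :=
            Finset.mem_filter.mpr ⟨Finset.mem_range.mpr (by omega), h⟩
          have := Finset.card_pos.mpr ⟨j, hmem⟩
          omega
        rw [h0]; exact I.zero_mem
      · rw [Stmt2Aux.Dzero hfd (by omega)]; exact I.zero_mem
    | succ n ih =>
      intro f hfI hfd hcard j
      by_cases hc : ((Finset.range (d + 1)).filter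
          (fun j => weightedHomogeneousComponent Stmt2Aux.w4 j f ≠ 0)).card ≤ n
      · exact ih f hfI hfd hc j
      have hpos : 0 < ((Finset.range (d + 1)).filter
          (fun j => weightedHomogeneousComponent Stmt2Aux.w4 j f ≠ 0)).card := by omega
      obtain ⟨j0, hj0⟩ := Finset.card_pos.mp hpos
      have hj0r := (Finset.mem_filter.mp hj0).1
      set g : MvPolynomial (Fin 4) k := X 3 * pderiv 3 f - (j0 : k) • f with hg
      have hgI : g ∈ I := Submodule.sub_mem _ (hE f hfI hfd) (hsmul _ _ hfI)
      have hgd : g ∈ homogeneousSubmodule (Fin 4) k d :=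
        Submodule.sub_mem _ (Stmt2Aux.homE hfd) (Submodule.smul_mem _ _ hfd)
      have hDg : ∀ j', weightedHomogeneousComponent Stmt2Aux.w4 j' g =
          ((j' : k) - (j0 : k)) • weightedHomogeneousComponent Stmt2Aux.w4 j' f := by
        intro j'
        ext m
        rw [Stmt2Aux.coeffD, coeff_smul, Stmt2Aux.coeffD]
        split_ifs with h
        · rw [hg, coeff_sub, Stmt2Aux.Ecoeff, coeff_smul, h, smul_eq_mul, smul_eq_mul]
          ring
        · simp
      have hsub : (Finset.range (d + 1)).filter
            (fun j => weightedHomogeneousComponent Stmt2Aux.w4 j g ≠ 0) ⊆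
          ((Finset.range (d + 1)).filter
            (fun j => weightedHomogeneousComponent Stmt2Aux.w4 j f ≠ 0)).erase j0 := by
        intro j' hj'
        obtain ⟨hr, hne⟩ := Finset.mem_filter.mp hj'
        have hne' : j' ≠ j0 := by
          rintro rfl
          exact hne (by rw [hDg, sub_self, zero_smul])
        refine Finset.mem_erase.mpr ⟨hne', Finset.mem_filter.mpr ⟨hr, ?_⟩⟩
        intro h0
        exact hne (by rw [hDg, h0, smul_zero])
      have hcard' : ((Finset.range (d + 1)).filter
          (fun j => weightedHomogeneousComponent Stmt2Aux.w4 j g ≠ 0)).card ≤ n := by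
        have h1 := Finset.card_le_card hsub
        have h2 := Finset.card_erase_of_mem hj0
        omega
      have hDgI := ih g hgI hgd hcard'
      have hne_case : ∀ j', j' ≠ j0 → weightedHomogeneousComponent Stmt2Aux.w4 j' f ∈ I := by
        intro j' hj'
        have hc0 : ((j' : k) - (j0 : k)) ≠ 0 :=
          sub_ne_zero_of_ne (by exact_mod_cast hj')
        have heq : weightedHomogeneousComponent Stmt2Aux.w4 j' f =
            ((j' : k) - (j0 : k))⁻¹ • weightedHomogeneousComponent Stmt2Aux.w4 j' g := by
          rw [hDg, smul_smul, inv_mul_cancel₀ hc0, one_smul]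
        rw [heq]
        exact hsmul _ _ (hDgI j')
      by_cases hjj : j = j0
      · subst hjj
        have heq : weightedHomogeneousComponent Stmt2Aux.w4 j f =
            f - ∑ j' ∈ (Finset.range (d + 1)).erase j,
              weightedHomogeneousComponent Stmt2Aux.w4 j' f := by
          rw [eq_sub_iff_add_eq, Finset.add_sum_erase _ (fun j' => weightedHomogeneousComponent Stmt2Aux.w4 j' f) hj0r]
          exact (Stmt2Aux.decomp hfd).symm
        rw [heq]
        exact Submodule.sub_mem _ hfI (Submodule.sum_mem _
          (fun j' hj' => hne_case j' (Finset.ne_of_mem_erase hj')))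
      · exact hne_case j hjj
  apply le_antisymm
  · rw [Submodule.span_le]
    rintro f ⟨hfI, hfd, -⟩
    exact ⟨hfI, hfd⟩
  · intro f hf
    rw [Submodule.mem_inf] at hf
    obtain ⟨hfI, hfd⟩ := hf
    rw [Submodule.restrictScalars_mem] at hfI
    rw [Stmt2Aux.decomp hfd]
    apply Submodule.sum_mem
    intro j hj
    have hjd : j ≤ d := by
      have := Finset.mem_range.mp hj; omega
    apply Submodule.subset_span
    refine ⟨key _ f hfI hfd le_rfl j, Stmt2Aux.homD hfd j, d - j, Nat.sub_le _ _,
      MvPolynomial.divMonomial (weightedHomogeneousComponent Stmt2Aux.w4 j f)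
        (Finsupp.single 3 j), ?_, ?_, ?_⟩
    · -- homogeneous of degree d - j
      intro m hm
      rw [MvPolynomial.coeff_divMonomial] at hm
      have hw : Finsupp.weight (1 : Fin 4 → ℕ) (Finsupp.single (3 : Fin 4) j + m) = d :=
        Stmt2Aux.homD hfd j hm
      have hws : Finsupp.weight (1 : Fin 4 → ℕ) (Finsupp.single (3 : Fin 4) j) = j := by
        rw [Finsupp.weight_apply, Finsupp.sum_single_index] <;> simp
      rw [map_add, hws] at hw
      omega
    · -- 3 ∉ vars
      rw [mem_vars]
      rintro ⟨m, hm, h3m⟩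
      rw [mem_support_iff, MvPolynomial.coeff_divMonomial, Stmt2Aux.coeffD] at hm
      have h3 : (Finsupp.single (3 : Fin 4) j + m) 3 = j := by
        by_contra h
        exact hm (if_neg h)
      rw [Finsupp.add_apply, Finsupp.single_eq_same] at h3
      have : m 3 = 0 := by omega
      exact (Finsupp.mem_support_iff.mp h3m) this
    · -- the equation
      rw [Nat.sub_sub_self hjd]
      ext m
      rw [X_pow_eq_monomial, coeff_monomial_mul', MvPolynomial.coeff_divMonomial]
      split_ifs with hle
      · rw [add_tsub_cancel_of_le hle, one_mul]
      · rw [Stmt2Aux.coeffD, if_neg]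
        intro h
        exact hle (Finsupp.single_le_iff.mpr (le_of_eq h.symm))
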